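/- arXiv:1707.05406 — 5 statements merged into one kernel-verified Lean document; each statement's English description precedes it below -/
import Mathlib

section
/- Let $r, m$ and $a_1,\ldots,a_r,b_1,\ldots,b_r$ be positive integers, and let $X=\prod_{i=1}^r K[a_i,b_i]$ be the direct product of the balanced complete multipartite graphs $K[a_i,b_i]$. Then the number of cliques of order $m$ in $X$ equals $\frac{1}{m!}\prod_{k=1}^m\prod_{i=1}^r \mathcal{S}_{k-1}(a_i,b_i)$; equivalently, $m!$ times the number of $m$-cliques of $X$ equals $\prod_{k=1}^m\prod_{i=1}^r \mathcal{S}_{k-1}(a_i,b_i)$. -/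
/-- The balanced complete `b`-partite graph with partite sets of size `a`:
vertices are pairs `(partite set, position within the set)`, and two vertices
are adjacent iff they lie in different partite sets. -/
def balancedMultipartite (a b : ℕ) : SimpleGraph (Fin b × Fin a) where
  Adj u v := u.1 ≠ v.1
  symm := ⟨fun _ _ h => h.symm⟩
  loopless := ⟨fun _ h => h rfl⟩

/-- The direct (tensor) product of a nonempty family of graphs:
two tuples are adjacent iff they are adjacent in every coordinate. -/
def directProd {r : ℕ} (hr : 0 < r) {V : Fin r → Type*}
    (G : ∀ i, SimpleGraph (V i)) : SimpleGraph (∀ i, V i) where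
  Adj f g := ∀ i, (G i).Adj (f i) (g i)
  symm := ⟨fun _ _ h i => (h i).symm⟩
  loopless := ⟨fun _ h => (G ⟨0, hr⟩).loopless.irrefl _ (h ⟨0, hr⟩)⟩

open Finset

section Aux

variable {V : Type*} [Fintype V] [DecidableEq V]

/-- Functions `Fin m → Fin c × Fin a` injective on the first coordinate
correspond to pairs of an embedding and an arbitrary function. -/
def factorEquiv (m a c : ℕ) :
    {h : Fin m → Fin c × Fin a // Function.Injective fun j => (h j).1} ≃
      (Fin m ↪ Fin c) × (Fin m → Fin a) where
  toFun h := (⟨fun j => (h.1 j).1, h.2⟩, fun j => (h.1 j).2)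
  invFun p := ⟨fun j => (p.1 j, p.2 j), fun j k hjk => p.1.injective hjk⟩
  left_inv h := rfl
  right_inv p := rfl

/-- The fiber over a clique `s` of order `m`, inside the "ordered pairwise-adjacent
tuples", is equivalent to the set of bijections `Fin m ≃ s`. -/
noncomputable def cliqueFiberEquiv {G : SimpleGraph V} {m : ℕ} {s : Finset V}
    (hs : G.IsNClique m s) :
    {g : Fin m → V // (∀ j k, j ≠ k → G.Adj (g j) (g k)) ∧ Finset.univ.image g = s} ≃
      (Fin m ≃ s) where
  toFun g := Equiv.ofBijective
      (fun j => (⟨g.1 j, by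
        have := Finset.mem_image_of_mem g.1 (Finset.mem_univ j)
        rwa [g.2.2] at this⟩ : s))
      (by
        have hinj : Function.Injective fun j =>
            (⟨g.1 j, by
        have := Finset.mem_image_of_mem g.1 (Finset.mem_univ j)
        rwa [g.2.2] at this⟩ : s) := by
          intro j k h
          by_contra hne
          exact (g.2.1 j k hne).ne (congrArg Subtype.val h)
        refine (Fintype.bijective_iff_injective_and_card _).2 ⟨hinj, ?_⟩
        simp [hs.card_eq])
  invFun e := ⟨fun j => (e j : V), by
    constructor
    · intro j k hjk
      exact hs.isClique (e j).2 (e k).2 fun h => hjk (e.injective (Subtype.ext h))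
    · ext x
      simp only [Finset.mem_image, Finset.mem_univ, true_and]
      constructor
      · rintro ⟨j, rfl⟩; exact (e j).2
      · intro hx; exact ⟨e.symm ⟨x, hx⟩, by simp⟩⟩
  left_inv g := rfl
  right_inv e := Equiv.ext fun j => Subtype.ext rfl

/-- Double counting: ordered pairwise-adjacent `m`-tuples are counted by
`m!` times the number of `m`-cliques. -/
lemma card_orderings (G : SimpleGraph V) [DecidableRel G.Adj] (m : ℕ) :
    (Finset.univ.filter fun g : Fin m → V => ∀ j k, j ≠ k → G.Adj (g j) (g k)).card
      = m.factorial * (G.cliqueFinset m).card := by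
  have key : ∀ g ∈ (Finset.univ.filter fun g : Fin m → V =>
      ∀ j k, j ≠ k → G.Adj (g j) (g k)), Finset.univ.image g ∈ G.cliqueFinset m := by
    intro g hg
    rw [Finset.mem_filter] at hg
    have hQ := hg.2
    have hinj : Function.Injective g := by
      intro j k h
      by_contra hne
      exact (hQ j k hne).ne h
    rw [SimpleGraph.mem_cliqueFinset_iff]
    constructor
    · intro x hx y hy hxy
      simp only [Finset.coe_image, Set.mem_image, Finset.coe_univ, Set.mem_univ,
        true_and] at hx hy
      obtain ⟨j, rfl⟩ := hx
      obtain ⟨k, rfl⟩ := hy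
      exact hQ j k (fun h => hxy (by rw [h]))
    · rw [Finset.card_image_of_injective _ hinj, Finset.card_univ, Fintype.card_fin]
  rw [Finset.card_eq_sum_card_fiberwise key]
  rw [Finset.sum_congr rfl (fun s hs => ?_), Finset.sum_const, smul_eq_mul, mul_comm]
  have hs' : G.IsNClique m s := SimpleGraph.mem_cliqueFinset_iff.1 hs
  have hfilter : (Finset.filter (fun g => Finset.univ.image g = s)
      (Finset.univ.filter fun g : Fin m → V => ∀ j k, j ≠ k → G.Adj (g j) (g k)))
      = Finset.univ.filter fun g : Fin m → V =>
          (∀ j k, j ≠ k → G.Adj (g j) (g k)) ∧ Finset.univ.image g = s := by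
    rw [Finset.filter_filter]
  rw [hfilter, ← Fintype.card_subtype]
  rw [Fintype.card_congr (cliqueFiberEquiv hs')]
  have e : Fin m ≃ s := (Fintype.equivFinOfCardEq (by simp [hs'.card_eq])).symm
  rw [Fintype.card_equiv e, Fintype.card_fin]

end Aux

/-- The number of cliques of order `m` in `X = ∏ K[aᵢ,bᵢ]` is
`(1/m!) ∏_{k=1}^{m} ∏_{i=1}^{r} 𝒮_{k-1}(aᵢ,bᵢ)`, where
`𝒮_m(x,y) = max{x(y-m),0}` (here expressed by truncated ℕ-subtraction). -/
theorem cliques_of_directProd_multipartite (r m : ℕ) (hr : 0 < r) (hm : 0 < m)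
    (a b : Fin r → ℕ) (ha : ∀ i, 0 < a i) (hb : ∀ i, 0 < b i) :
    Nat.factorial m *
      {s : Finset (∀ i : Fin r, Fin (b i) × Fin (a i)) |
        (directProd hr (fun i => balancedMultipartite (a i) (b i))).IsNClique m s}.ncard
      = ∏ k ∈ Finset.range m, ∏ i : Fin r, a i * (b i - k) := by
  classical
  set G := directProd hr (fun i => balancedMultipartite (a i) (b i)) with hG
  haveI : DecidableRel G.Adj :=
    fun f g => Classical.dec _
  have hset : {s : Finset (∀ i : Fin r, Fin (b i) × Fin (a i)) | G.IsNClique m s}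
      = ↑(G.cliqueFinset m) := by
    ext s
    simp [SimpleGraph.mem_cliqueFinset_iff]
  rw [hset, Set.ncard_coe_finset, ← card_orderings G m, ← Fintype.card_subtype]
  have E : {g : Fin m → ∀ i, Fin (b i) × Fin (a i) //
        ∀ j k, j ≠ k → G.Adj (g j) (g k)} ≃
      ∀ i, ((Fin m ↪ Fin (b i)) × (Fin m → Fin (a i))) := by
    refine Equiv.trans ?_ (Equiv.trans Equiv.subtypePiEquivPi
      (Equiv.piCongrRight fun i => factorEquiv m (a i) (b i)))
    refine (Equiv.piComm _).subtypeEquiv fun g => ?_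
    show (∀ j k, j ≠ k → G.Adj (g j) (g k)) ↔
      ∀ i, Function.Injective fun j => (g j i).1
    constructor
    · intro hQ i j k heq
      by_contra hjk
      exact hQ j k hjk i heq
    · intro h j k hjk i heq
      exact hjk (h i heq)
  rw [Fintype.card_congr E, Fintype.card_pi]
  rw [Finset.prod_comm]
  refine Finset.prod_congr rfl fun i _ => ?_
  rw [Fintype.card_prod, Fintype.card_embedding_eq, Fintype.card_fun,
    Fintype.card_fin, Fintype.card_fin, Fintype.card_fin,
    Finset.prod_mul_distrib, Finset.prod_const, Finset.card_range,
    Nat.descFactorial_eq_prod_range, mul_comm]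
end

section
/- Let $r, m$ and $a_1,\ldots,a_r,b_1,\ldots,b_r$ be positive integers, let $X=\prod_{i=1}^r K[a_i,b_i]$, and let $D$ be a clique of order $m$ in $X$. Then the number of vertices of $X$ adjacent to every vertex of $D$ is exactly $\prod_{i=1}^r \mathcal{S}_m(a_i,b_i)$. -/
/-- If `D` is a clique of order `m` in `X = ∏ K[aᵢ,bᵢ]`, then the number of
vertices of `X` adjacent to every vertex of `D` is `∏ᵢ 𝒮_m(aᵢ,bᵢ)`, where
`𝒮_m(x,y) = max{x(y-m),0}` (truncated ℕ-subtraction). -/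
theorem common_neighbors_of_clique (r m : ℕ) (hr : 0 < r) (hm : 0 < m)
    (a b : Fin r → ℕ) (ha : ∀ i, 0 < a i) (hb : ∀ i, 0 < b i)
    (D : Finset (∀ i : Fin r, Fin (b i) × Fin (a i)))
    (hD : (directProd hr (fun i => balancedMultipartite (a i) (b i))).IsNClique m D) :
    {z : ∀ i : Fin r, Fin (b i) × Fin (a i) |
        ∀ w ∈ D, (directProd hr (fun i => balancedMultipartite (a i) (b i))).Adj z w}.ncard
      = ∏ i : Fin r, a i * (b i - m) := by
  classical
  set S : ∀ i : Fin r, Finset (Fin (b i)) := fun i => D.image (fun w => (w i).1) with hS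
  have hcard : ∀ i, (S i).card = m := by
    intro i
    rw [hS]
    rw [Finset.card_image_of_injOn, hD.card_eq]
    intro w hw w' hw' hww'
    by_contra hne
    exact (hD.1 hw hw' hne : ∀ i, (w i).1 ≠ (w' i).1) i hww'
  have hset : {z : ∀ i : Fin r, Fin (b i) × Fin (a i) |
        ∀ w ∈ D, (directProd hr (fun i => balancedMultipartite (a i) (b i))).Adj z w}
      = ↑(Fintype.piFinset (fun i => ((S i)ᶜ ×ˢ (Finset.univ : Finset (Fin (a i)))))) := by
    ext z
    simp only [Set.mem_setOf_eq, Finset.mem_coe, Fintype.mem_piFinset,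
      Finset.mem_product, Finset.mem_compl, Finset.mem_univ, and_true, hS,
      Finset.mem_image, not_exists]
    constructor
    · intro h i w hw
      exact (h w hw.1 : ∀ i, (z i).1 ≠ (w i).1) i hw.2.symm
    · intro h w hw
      show ∀ i, (z i).1 ≠ (w i).1
      intro i e
      exact h i w ⟨hw, e.symm⟩
  rw [hset, Set.ncard_coe_finset, Fintype.card_piFinset]
  refine Finset.prod_congr rfl fun i _ => ?_
  rw [Finset.card_product, Finset.card_compl, hcard, Finset.card_univ,
    Fintype.card_fin, Fintype.card_fin, mul_comm]
end

section
/- Let $n\ge 2$ and $m\ge 1$ be integers. The number of cliques of order $m$ in the unitary Cayley graph $G_{\mathbb{Z}/n\mathbb{Z}}$ equals $\prod_{k=1}^m \frac{S_{k-1}(n)}{k}$; equivalently, $m!$ times the number of $m$-cliques of $G_{\mathbb{Z}/n\mathbb{Z}}$ equals $\prod_{k=1}^m S_{k-1}(n)$. -/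
/-- The unitary Cayley graph of `ℤ/nℤ`: two distinct vertices are adjacent
iff their difference is a unit of `ℤ/nℤ`. -/
def unitaryCayley (n : ℕ) : SimpleGraph (ZMod n) where
  Adj u v := u ≠ v ∧ IsUnit (u - v)
  symm := ⟨fun _ _ h => ⟨h.1.symm, by rw [← neg_sub]; exact h.2.neg⟩⟩
  loopless := ⟨fun _ h => h.1 rfl⟩

/-- The `r`-th Schemmel totient function:
`S_r(n) = #{k : 1 ≤ k ≤ n, gcd(k+i,n) = 1 for all 0 ≤ i ≤ r-1}`. -/
def schemmel (r n : ℕ) : ℕ :=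
  ((Finset.Icc 1 n).filter (fun k => ∀ i < r, Nat.gcd (k + i) n = 1)).card

open Finset

private lemma natCard_subtype {α : Type*} [Fintype α] (p : α → Prop) [DecidablePred p] :
    Nat.card {x // p x} = (univ.filter p).card := by
  rw [Nat.card_eq_fintype_card, Fintype.card_subtype]

private lemma prod_isUnit_iff' {M N : Type*} [Monoid M] [Monoid N] (x : M × N) :
    IsUnit x ↔ IsUnit x.1 ∧ IsUnit x.2 := by
  constructor
  · intro h
    exact ⟨h.map (MonoidHom.fst M N), h.map (MonoidHom.snd M N)⟩
  · rintro ⟨⟨u, hu⟩, ⟨v, hv⟩⟩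
    exact ⟨⟨(↑u, ↑v), (↑u⁻¹, ↑v⁻¹), by ext <;> simp, by ext <;> simp⟩, by
      simp [Prod.ext_iff, hu, hv]⟩

private lemma card_crt {a b : ℕ} (h : a.Coprime b) (Q : ZMod a → Prop) (R : ZMod b → Prop) :
    Nat.card {y : ZMod (a * b) //
        Q (ZMod.chineseRemainder h y).1 ∧ R (ZMod.chineseRemainder h y).2}
      = Nat.card {x : ZMod a // Q x} * Nat.card {x : ZMod b // R x} := by
  rw [← Nat.card_prod]
  exact Nat.card_congr (((ZMod.chineseRemainder h).toEquiv.subtypeEquiv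
    (fun y => Iff.rfl)).trans (Equiv.subtypeProdEquivProd))

private lemma isUnit_crt {a b : ℕ} (h : a.Coprime b) (y : ZMod (a * b)) :
    IsUnit y ↔ IsUnit (ZMod.chineseRemainder h y).1 ∧ IsUnit (ZMod.chineseRemainder h y).2 := by
  rw [← prod_isUnit_iff']
  constructor
  · intro hy; exact hy.map (ZMod.chineseRemainder h)
  · intro hy
    have := hy.map (ZMod.chineseRemainder h).symm
    rwa [RingEquiv.symm_apply_apply] at this

private lemma fiber_card_eq {α β : Type*} [AddCommGroup α] [AddCommGroup β] (f : α → β)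
    (hadd : ∀ x y, f (x + y) = f x + f y) (hs : Function.Surjective f) (b b0 : β) :
    Nat.card {y : α // f y = b} = Nat.card {y : α // f y = b0} := by
  obtain ⟨d, hd⟩ := hs (b0 - b)
  refine Nat.card_congr (Equiv.subtypeEquiv (Equiv.addRight d) fun y => ?_)
  have he : (Equiv.addRight d) y = y + d := rfl
  rw [he, hadd, hd]
  constructor
  · intro h; rw [h]; abel
  · intro h
    have h' := eq_sub_of_add_eq h
    rwa [sub_sub_cancel] at h'

private lemma card_filter_not_mem {α β : Type*} [Fintype α] [Fintype β] [DecidableEq β]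
    (f : α → β) (b0 : β)
    (hf : ∀ b : β, Nat.card {y : α // f y = b} = Nat.card {y : α // f y = b0})
    (A B : Finset β) (hAB : A.card = B.card) :
    Nat.card {y : α // f y ∉ A} = Nat.card {y : α // f y ∉ B} := by
  classical
  have key : ∀ C : Finset β, Nat.card {y : α // f y ∉ C}
      = Fintype.card α - C.card * Nat.card {y : α // f y = b0} := by
    intro C
    have h1 : (univ.filter (fun y : α => f y ∈ C)).card
        = ∑ c ∈ C, (univ.filter (fun y : α => f y = c)).card := by
      rw [card_eq_sum_card_fiberwise (s := univ.filter (fun y : α => f y ∈ C)) (t := C)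
        (fun x hx => (mem_filter.mp hx).2)]
      refine Finset.sum_congr rfl fun c hc => ?_
      congr 1
      ext y
      simp only [mem_filter, mem_univ, true_and, and_iff_right_iff_imp]
      intro hy; rw [hy]; exact hc
    have h2 : ∑ c ∈ C, (univ.filter (fun y : α => f y = c)).card
        = C.card * Nat.card {y : α // f y = b0} := by
      rw [Finset.sum_congr rfl (fun c _ => by rw [← natCard_subtype, hf c]),
        Finset.sum_const, smul_eq_mul]
    have h3 := Finset.card_filter_add_card_filter_not
      (s := (univ : Finset α)) (p := fun y : α => f y ∈ C)
    rw [natCard_subtype]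
    rw [Finset.card_univ] at h3
    omega
  rw [key A, key B, hAB]

private noncomputable def Mcnt (n k : ℕ) : ℕ := Nat.card {y : ZMod n // ∀ i < k, IsUnit (y + (i : ℕ))}

private noncomputable def Ecnt (n : ℕ) (t : Finset (ZMod n)) : ℕ :=
  Nat.card {y : ZMod n // ∀ x ∈ t, IsUnit (y - x)}

private def IsCliqueF {n : ℕ} (t : Finset (ZMod n)) : Prop :=
  ∀ x ∈ t, ∀ y ∈ t, x ≠ y → IsUnit (x - y)

private lemma isUnit_zmod_pow_iff {p e : ℕ} (hp : p.Prime) (he : e ≠ 0) (z : ZMod (p ^ e)) :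
    IsUnit z ↔ ZMod.castHom (dvd_pow_self p he) (ZMod p) z ≠ 0 := by
  haveI : Fact p.Prime := ⟨hp⟩
  haveI : NeZero (p ^ e) := ⟨pow_ne_zero e hp.pos.ne'⟩
  have hz : ((z.val : ℕ) : ZMod (p ^ e)) = z := ZMod.natCast_zmod_val z
  conv_lhs => rw [← hz]
  conv_rhs => rw [← hz]
  rw [ZMod.isUnit_iff_coprime, map_natCast, Ne, ZMod.natCast_eq_zero_iff,
    Nat.coprime_pow_right_iff (Nat.pos_of_ne_zero he), Nat.coprime_comm,
    hp.coprime_iff_not_dvd]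

private lemma Ecnt_pp {p e : ℕ} (hp : p.Prime) (he : e ≠ 0)
    (t : Finset (ZMod (p ^ e))) (ht : IsCliqueF t) :
    Ecnt (p ^ e) t = Mcnt (p ^ e) t.card := by
  classical
  haveI : Fact p.Prime := ⟨hp⟩
  haveI : NeZero (p ^ e) := ⟨pow_ne_zero e hp.pos.ne'⟩
  set φ : ZMod (p ^ e) →+* ZMod p := ZMod.castHom (dvd_pow_self p he) (ZMod p) with hφ
  have hu : ∀ z : ZMod (p ^ e), IsUnit z ↔ φ z ≠ 0 := fun z => isUnit_zmod_pow_iff hp he z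
  have hsurj : Function.Surjective φ := fun b =>
    ⟨((b.val : ℕ) : ZMod (p ^ e)), by rw [map_natCast, ZMod.natCast_zmod_val]⟩
  set k := t.card with hk
  set A : Finset (ZMod p) := t.image φ with hAdef
  set B : Finset (ZMod p) := (range k).image (fun i : ℕ => -(i : ZMod p)) with hBdef
  have hinj : Set.InjOn φ ↑t := by
    intro x hx y hy hxy
    by_contra hne
    have h2 := ht x hx y hy hne
    rw [hu, map_sub, hxy, sub_self] at h2
    exact h2 rfl
  have hA : A.card = k := Finset.card_image_of_injOn hinj
  have hkp : k ≤ p := by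
    have h1 : A.card ≤ Fintype.card (ZMod p) := by
      simpa using Finset.card_le_univ A
    rwa [hA, ZMod.card] at h1
  have hB : B.card = k := by
    rw [hBdef, Finset.card_image_of_injOn, card_range]
    intro i hi j hj hij
    simp only [coe_range, Set.mem_Iio] at hi hj
    have hij' : (i : ZMod p) = (j : ZMod p) := neg_inj.mp hij
    have := congrArg ZMod.val hij'
    rwa [ZMod.val_cast_of_lt (lt_of_lt_of_le hi hkp),
      ZMod.val_cast_of_lt (lt_of_lt_of_le hj hkp)] at this
  have hEA : Ecnt (p ^ e) t = Nat.card {y : ZMod (p ^ e) // φ y ∉ A} := by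
    refine Nat.card_congr (Equiv.subtypeEquivRight fun y => ?_)
    constructor
    · intro hy hmem
      obtain ⟨x, hx, hx'⟩ := Finset.mem_image.mp hmem
      have := hy x hx
      rw [hu, map_sub, hx', sub_self] at this
      exact this rfl
    · intro hy x hx
      rw [hu, map_sub, sub_ne_zero]
      intro hcon
      exact hy (Finset.mem_image.mpr ⟨x, hx, hcon.symm⟩)
  have hMB : Mcnt (p ^ e) k = Nat.card {y : ZMod (p ^ e) // φ y ∉ B} := by
    refine Nat.card_congr (Equiv.subtypeEquivRight fun y => ?_)
    constructor
    · intro hy hmem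
      obtain ⟨i, hi, hi'⟩ := Finset.mem_image.mp hmem
      have := hy i (mem_range.mp hi)
      rw [hu, map_add, map_natCast] at this
      exact this (by rw [← hi']; ring)
    · intro hy i hi
      rw [hu, map_add, map_natCast]
      intro hcon
      refine hy (Finset.mem_image.mpr ⟨i, mem_range.mpr hi, ?_⟩)
      linear_combination -hcon
  rw [hEA, hMB]
  exact card_filter_not_mem φ 0 (fun b => fiber_card_eq φ (map_add φ) hsurj b 0) A B
    (hA.trans hB.symm)

private lemma Ecnt_eq_Mcnt : ∀ n : ℕ, n ≠ 0 → ∀ t : Finset (ZMod n), IsCliqueF t →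
    Ecnt n t = Mcnt n t.card := by
  intro n
  induction n using Nat.recOnPosPrimePosCoprime with
  | prime_pow p e hpp he =>
    intro _ t ht
    exact Ecnt_pp hpp he.ne' t ht
  | zero => exact fun h => absurd rfl h
  | one =>
    intro _ t _
    have huniv : ∀ P : ZMod 1 → Prop, (∀ y, P y) → Nat.card {y : ZMod 1 // P y} = 1 := by
      intro P hP
      rw [Nat.card_congr (Equiv.subtypeUnivEquiv hP), Nat.card_eq_fintype_card, ZMod.card]
    rw [Ecnt, Mcnt, huniv _ (fun y x _ => isUnit_of_subsingleton _),
      huniv _ (fun y i _ => isUnit_of_subsingleton _)]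
  | coprime a b ha hb hab iha ihb =>
    intro _ t ht
    set e := ZMod.chineseRemainder hab with hedef
    haveI : Fact (1 < a) := ⟨ha⟩
    haveI : Fact (1 < b) := ⟨hb⟩
    set t1 := t.image (fun x => (e x).1) with ht1
    set t2 := t.image (fun x => (e x).2) with ht2
    have hinj1 : ∀ x ∈ t, ∀ y ∈ t, (e x).1 = (e y).1 → x = y := by
      intro x hx y hy hxy
      by_contra hne
      have h2 := ((isUnit_crt hab _).mp (ht x hx y hy hne)).1
      rw [map_sub, Prod.fst_sub, hxy, sub_self] at h2
      rw [isUnit_zero_iff] at h2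
      exact zero_ne_one h2
    have hinj2 : ∀ x ∈ t, ∀ y ∈ t, (e x).2 = (e y).2 → x = y := by
      intro x hx y hy hxy
      by_contra hne
      have h2 := ((isUnit_crt hab _).mp (ht x hx y hy hne)).2
      rw [map_sub, Prod.snd_sub, hxy, sub_self] at h2
      rw [isUnit_zero_iff] at h2
      exact zero_ne_one h2
    have hc1 : t1.card = t.card :=
      Finset.card_image_of_injOn (fun x hx y hy hxy => hinj1 x hx y hy hxy)
    have hc2 : t2.card = t.card :=
      Finset.card_image_of_injOn (fun x hx y hy hxy => hinj2 x hx y hy hxy)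
    have hcl1 : IsCliqueF t1 := by
      intro x1 hx1 y1 hy1 hne
      obtain ⟨x, hx, rfl⟩ := Finset.mem_image.mp hx1
      obtain ⟨y, hy, rfl⟩ := Finset.mem_image.mp hy1
      have hxy : x ≠ y := fun hh => hne (by rw [hh])
      have h2 := ((isUnit_crt hab _).mp (ht x hx y hy hxy)).1
      rwa [map_sub, Prod.fst_sub] at h2
    have hcl2 : IsCliqueF t2 := by
      intro x1 hx1 y1 hy1 hne
      obtain ⟨x, hx, rfl⟩ := Finset.mem_image.mp hx1
      obtain ⟨y, hy, rfl⟩ := Finset.mem_image.mp hy1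
      have hxy : x ≠ y := fun hh => hne (by rw [hh])
      have h2 := ((isUnit_crt hab _).mp (ht x hx y hy hxy)).2
      rwa [map_sub, Prod.snd_sub] at h2
    have hE : Ecnt (a * b) t = Ecnt a t1 * Ecnt b t2 := by
      rw [Ecnt, Ecnt, Ecnt, ← card_crt hab (fun z => ∀ x1 ∈ t1, IsUnit (z - x1))
        (fun z => ∀ x2 ∈ t2, IsUnit (z - x2))]
      refine Nat.card_congr (Equiv.subtypeEquivRight fun y => ?_)
      constructor
      · intro hy
        constructor
        · intro x1 hx1
          obtain ⟨x, hx, rfl⟩ := Finset.mem_image.mp hx1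
          have := ((isUnit_crt hab _).mp (hy x hx)).1
          rwa [map_sub, Prod.fst_sub] at this
        · intro x2 hx2
          obtain ⟨x, hx, rfl⟩ := Finset.mem_image.mp hx2
          have := ((isUnit_crt hab _).mp (hy x hx)).2
          rwa [map_sub, Prod.snd_sub] at this
      · rintro ⟨hy1, hy2⟩ x hx
        rw [isUnit_crt hab, map_sub, Prod.fst_sub, Prod.snd_sub]
        exact ⟨hy1 _ (Finset.mem_image_of_mem _ hx), hy2 _ (Finset.mem_image_of_mem _ hx)⟩
    have hM : Mcnt (a * b) t.card = Mcnt a t.card * Mcnt b t.card := by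
      rw [Mcnt, Mcnt, Mcnt, ← card_crt hab (fun z => ∀ i < t.card, IsUnit (z + (i : ℕ)))
        (fun z => ∀ i < t.card, IsUnit (z + (i : ℕ)))]
      refine Nat.card_congr (Equiv.subtypeEquivRight fun y => ?_)
      have hcast : ∀ i : ℕ, e (y + (i : ℕ)) = (((e y).1 + (i : ℕ)), ((e y).2 + (i : ℕ))) := by
        intro i
        rw [map_add, map_natCast]
        ext <;> simp
      constructor
      · intro hy
        constructor
        · intro i hi
          have := ((isUnit_crt hab _).mp (hy i hi))
          rw [hcast i] at this
          exact this.1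
        · intro i hi
          have := ((isUnit_crt hab _).mp (hy i hi))
          rw [hcast i] at this
          exact this.2
      · rintro ⟨hy1, hy2⟩ i hi
        rw [isUnit_crt hab, hcast i]
        exact ⟨hy1 i hi, hy2 i hi⟩
    rw [hE, hM, iha (by omega) t1 hcl1, ihb (by omega) t2 hcl2, hc1, hc2]

private lemma schemmel_eq_Mcnt (k n : ℕ) (hn : n ≠ 0) : schemmel k n = Mcnt n k := by
  classical
  haveI : NeZero n := ⟨hn⟩
  rw [Mcnt, natCard_subtype, schemmel]
  apply Finset.card_bij (fun (a : ℕ) _ => ((a : ℕ) : ZMod n))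
  · intro a ha
    rw [mem_filter] at ha
    refine mem_filter.mpr ⟨mem_univ _, fun i hi => ?_⟩
    rw [← Nat.cast_add, ZMod.isUnit_iff_coprime]
    exact ha.2 i hi
  · intro a ha b hb hab
    rw [mem_filter, mem_Icc] at ha hb
    have h := (ZMod.natCast_eq_natCast_iff a b n).mp hab
    unfold Nat.ModEq at h
    rcases eq_or_lt_of_le ha.1.2 with h1 | h1
    · rcases eq_or_lt_of_le hb.1.2 with h2 | h2
      · rw [h1, h2]
      · rw [h1, Nat.mod_self, Nat.mod_eq_of_lt h2] at h
        omega
    · rcases eq_or_lt_of_le hb.1.2 with h2 | h2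
      · rw [h2, Nat.mod_self, Nat.mod_eq_of_lt h1] at h
        omega
      · rwa [Nat.mod_eq_of_lt h1, Nat.mod_eq_of_lt h2] at h
  · intro y hy
    rw [mem_filter] at hy
    have hv : y.val < n := ZMod.val_lt y
    have hcast : (((if y.val = 0 then n else y.val) : ℕ) : ZMod n) = y := by
      split_ifs with h0
      · rw [ZMod.natCast_self]
        exact ((ZMod.val_eq_zero y).mp h0).symm
      · exact ZMod.natCast_zmod_val y
    refine ⟨if y.val = 0 then n else y.val, mem_filter.mpr ⟨mem_Icc.mpr ?_, fun i hi => ?_⟩,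
      hcast⟩
    · split_ifs with h0
      · omega
      · omega
    · have h2 := hy.2 i hi
      rw [← hcast, ← Nat.cast_add, ZMod.isUnit_iff_coprime] at h2
      exact h2

/-- The number of cliques of order `m` in `G_{ℤ/nℤ}` equals
`∏_{k=1}^{m} S_{k-1}(n)/k`; equivalently, `m!` times the number of
`m`-cliques equals `∏_{k=1}^{m} S_{k-1}(n)`. -/
theorem cliques_of_unitaryCayley (n m : ℕ) (hn : 2 ≤ n) (hm : 1 ≤ m) :
    Nat.factorial m *
      {s : Finset (ZMod n) | (unitaryCayley n).IsNClique m s}.ncard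
      = ∏ k ∈ Finset.range m, schemmel k n := by
  classical
  haveI : NeZero n := ⟨by omega⟩
  haveI : Fact (1 < n) := ⟨hn⟩
  have hn0 : n ≠ 0 := by omega
  have hncard : {s : Finset (ZMod n) | (unitaryCayley n).IsNClique m s}.ncard
      = (univ.filter fun s : Finset (ZMod n) => (unitaryCayley n).IsNClique m s).card := by
    rw [← Set.ncard_coe_finset]
    congr 1
    ext s
    simp
  rw [hncard]
  clear hm hncard
  induction m with
  | zero =>
    rw [Nat.factorial_zero, Finset.range_zero, Finset.prod_empty, one_mul]
    have hset : (univ.filter fun s : Finset (ZMod n) => (unitaryCayley n).IsNClique 0 s)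
        = {∅} := by
      ext s
      rw [mem_filter, mem_singleton, SimpleGraph.isNClique_iff, Finset.card_eq_zero]
      constructor
      · rintro ⟨-, -, h⟩; exact h
      · rintro rfl
        exact ⟨mem_univ _, by simp [SimpleGraph.isClique_iff], rfl⟩
    rw [hset, card_singleton]
  | succ m ih =>
    have step : (m + 1) * (univ.filter fun s : Finset (ZMod n) =>
        (unitaryCayley n).IsNClique (m + 1) s).card
        = schemmel m n * (univ.filter fun s : Finset (ZMod n) =>
          (unitaryCayley n).IsNClique m s).card := by
      have hL : ((univ.filter fun s : Finset (ZMod n) =>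
          (unitaryCayley n).IsNClique (m + 1) s).sigma (fun s => s)).card
          = (univ.filter fun s : Finset (ZMod n) =>
            (unitaryCayley n).IsNClique (m + 1) s).card * (m + 1) := by
        rw [Finset.card_sigma]
        exact Finset.sum_const_nat fun s hs => (mem_filter.mp hs).2.card_eq
      have hR : ((univ.filter fun s : Finset (ZMod n) =>
          (unitaryCayley n).IsNClique m s).sigma
          (fun t => univ.filter fun y => ∀ x ∈ t, IsUnit (y - x))).card
          = (univ.filter fun s : Finset (ZMod n) =>
            (unitaryCayley n).IsNClique m s).card * schemmel m n := by
        rw [Finset.card_sigma]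
        refine Finset.sum_const_nat fun t ht2 => ?_
        have htc := (mem_filter.mp ht2).2
        have hcl : IsCliqueF t := fun x hx y hy hne =>
          (htc.isClique (Finset.mem_coe.mpr hx) (Finset.mem_coe.mpr hy) hne).2
        rw [← natCard_subtype]
        rw [show Nat.card {y : ZMod n // ∀ x ∈ t, IsUnit (y - x)} = Ecnt n t from rfl,
          Ecnt_eq_Mcnt n hn0 t hcl, htc.card_eq, ← schemmel_eq_Mcnt m n hn0]
      rw [mul_comm (m + 1), mul_comm (schemmel m n), ← hL, ← hR]
      refine Finset.card_bij' (fun p _ => ⟨p.1.erase p.2, p.2⟩)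
        (fun q _ => ⟨insert q.2 q.1, q.2⟩) ?_ ?_ ?_ ?_
      · intro p hp
        obtain ⟨hp1, hp2⟩ := mem_sigma.mp hp
        have hcl := (mem_filter.mp hp1).2
        refine mem_sigma.mpr ⟨mem_filter.mpr ⟨mem_univ _, ?_, ?_⟩, ?_⟩
        · exact hcl.isClique.subset (by exact_mod_cast Finset.erase_subset _ _)
        · rw [Finset.card_erase_of_mem hp2, hcl.card_eq]
          omega
        · refine mem_filter.mpr ⟨mem_univ _, fun x hx => ?_⟩
          simp only [Finset.mem_erase] at hx
          exact (hcl.isClique (Finset.mem_coe.mpr hp2)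
            (Finset.mem_coe.mpr hx.2) (Ne.symm hx.1)).2
      · intro q hq
        obtain ⟨hq1, hq2⟩ := mem_sigma.mp hq
        have htc := (mem_filter.mp hq1).2
        have hext := (mem_filter.mp hq2).2
        have hnot : q.2 ∉ q.1 := by
          intro hmem
          have := hext q.2 hmem
          rw [sub_self, isUnit_zero_iff] at this
          exact zero_ne_one this
        refine mem_sigma.mpr ⟨mem_filter.mpr ⟨mem_univ _, ?_, ?_⟩, Finset.mem_insert_self _ _⟩
        · haveI : Std.Symm (unitaryCayley n).Adj := (unitaryCayley n).symm
          rw [SimpleGraph.isClique_iff, Finset.coe_insert,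
            Set.pairwise_insert_of_symmetric]
          exact ⟨htc.isClique, fun x hx hne => ⟨hne, hext x (Finset.mem_coe.mp hx)⟩⟩
        · rw [Finset.card_insert_of_notMem hnot, htc.card_eq]
      · intro p hp
        obtain ⟨hp1, hp2⟩ := mem_sigma.mp hp
        obtain ⟨s, y⟩ := p
        simp only at hp2 ⊢
        rw [Finset.insert_erase hp2]
      · intro q hq
        obtain ⟨hq1, hq2⟩ := mem_sigma.mp hq
        have hext := (mem_filter.mp hq2).2
        have hnot : q.2 ∉ q.1 := by
          intro hmem
          have := hext q.2 hmem
          rw [sub_self, isUnit_zero_iff] at this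
          exact zero_ne_one this
        obtain ⟨t, y⟩ := q
        simp only at hnot ⊢
        rw [Finset.erase_insert hnot]
    calc Nat.factorial (m + 1) *
          (univ.filter fun s : Finset (ZMod n) => (unitaryCayley n).IsNClique (m + 1) s).card
        = Nat.factorial m * ((m + 1) *
          (univ.filter fun s : Finset (ZMod n) =>
            (unitaryCayley n).IsNClique (m + 1) s).card) := by
          rw [Nat.factorial_succ]; ring
      _ = Nat.factorial m * (schemmel m n *
          (univ.filter fun s : Finset (ZMod n) => (unitaryCayley n).IsNClique m s).card) := by
          rw [step]
      _ = schemmel m n * (Nat.factorial m *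
          (univ.filter fun s : Finset (ZMod n) => (unitaryCayley n).IsNClique m s).card) := by
          ring
      _ = schemmel m n * ∏ k ∈ Finset.range m, schemmel k n := by rw [ih]
      _ = ∏ k ∈ Finset.range (m + 1), schemmel k n := by rw [Finset.prod_range_succ]; ring
end

section
/- For every integer $n\ge 2$, the number of triangles (cliques of order $3$) in the unitary Cayley graph $G_{\mathbb{Z}/n\mathbb{Z}}$ equals $\frac{1}{6}n\varphi(n)S_2(n)$; equivalently, six times the number of triangles equals $n\,\varphi(n)\,S_2(n)$. -/
open Finset

lemma adj_of_isUnit_sub {n : ℕ} [Nontrivial (ZMod n)] {u v : ZMod n}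
    (h : IsUnit (u - v)) : (unitaryCayley n).Adj u v := by
  refine ⟨?_, h⟩
  rintro rfl
  rw [sub_self] at h
  exact not_isUnit_zero h

/-- Units of `ZMod n` count. -/
lemma card_filter_isUnit (n : ℕ) [NeZero n]
    [DecidablePred (fun u : ZMod n => IsUnit u)] :
    ((univ : Finset (ZMod n)).filter (fun u => IsUnit u)).card = Nat.totient n := by
  rw [← ZMod.card_units_eq_totient n, ← Finset.card_univ]
  symm
  apply Finset.card_bij (fun (u : (ZMod n)ˣ) _ => (u : ZMod n))
  · intro u _; simp [u.isUnit]
  · intro u _ v _ h; exact Units.ext h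
  · intro b hb
    simp only [mem_filter] at hb
    obtain ⟨u, rfl⟩ := hb.2
    exact ⟨u, Finset.mem_univ u, rfl⟩

/-- The "w" count equals the Schemmel totient. -/
lemma card_filter_schemmel (n : ℕ) (hn : 2 ≤ n) [NeZero n]
    [DecidablePred (fun w : ZMod n => IsUnit w ∧ IsUnit (w - 1))] :
    ((univ : Finset (ZMod n)).filter (fun w => IsUnit w ∧ IsUnit (w - 1))).card
      = schemmel 2 n := by
  haveI : Fact (1 < n) := ⟨by omega⟩
  rw [schemmel]
  apply Finset.card_bij (fun (w : ZMod n) _ => (w - 1).val)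
  · intro w hw
    simp only [mem_filter, mem_univ, true_and] at hw
    obtain ⟨hw1, hw2⟩ := hw
    have hne : w - 1 ≠ 0 := by
      rintro h
      rw [h] at hw2
      exact not_isUnit_zero hw2
    have hval : (w - 1).val ≠ 0 := fun h => hne ((ZMod.val_eq_zero (w - 1)).mp h)
    have hcast : (((w - 1).val : ℕ) : ZMod n) = w - 1 := by
      simp [ZMod.natCast_val, ZMod.cast_id]
    simp only [mem_filter, mem_Icc]
    refine ⟨⟨by omega, le_of_lt (ZMod.val_lt _)⟩, ?_⟩
    intro i hi
    interval_cases i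
    · have : IsUnit (((w - 1).val : ZMod n)) := by rw [hcast]; exact hw2
      simpa using (ZMod.isUnit_iff_coprime _ n).mp this
    · have : IsUnit ((((w - 1).val + 1 : ℕ) : ZMod n)) := by
        push_cast
        rw [hcast, sub_add_cancel]
        exact hw1
      exact (ZMod.isUnit_iff_coprime _ n).mp this
  · intro w _ w' _ h
    have h2 : w - 1 = w' - 1 := ZMod.val_injective n h
    linear_combination h2
  · intro k hk
    simp only [mem_filter, mem_Icc] at hk
    obtain ⟨⟨hk1, hk2⟩, hgcd⟩ := hk
    have h0 := hgcd 0 (by norm_num)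
    have h1 := hgcd 1 (by norm_num)
    simp only [add_zero] at h0
    have hklt : k < n := by
      rcases lt_or_eq_of_le hk2 with h | rfl
      · exact h
      · rw [Nat.gcd_self] at h0; omega
    refine ⟨(k : ZMod n) + 1, ?_, ?_⟩
    · simp only [mem_filter, mem_univ, true_and]
      constructor
      · have : IsUnit (((k + 1 : ℕ) : ZMod n)) :=
          (ZMod.isUnit_iff_coprime _ n).mpr h1
        simpa using this
      · rw [add_sub_cancel_right]
        exact (ZMod.isUnit_iff_coprime _ n).mpr h0
    · rw [add_sub_cancel_right]
      exact ZMod.val_cast_of_lt hklt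

/-- The number of triangles (cliques of order 3) in `G_{ℤ/nℤ}` equals
`n·φ(n)·S₂(n)/6`; equivalently, six times the number of triangles is
`n·φ(n)·S₂(n)`. -/
theorem triangles_of_unitaryCayley (n : ℕ) (hn : 2 ≤ n) :
    6 * {s : Finset (ZMod n) | (unitaryCayley n).IsNClique 3 s}.ncard
      = n * Nat.totient n * schemmel 2 n := by
  classical
  haveI : NeZero n := ⟨by omega⟩
  haveI : Fact (1 < n) := ⟨by omega⟩
  set G := unitaryCayley n with hG
  set T : Finset (Finset (ZMod n)) := univ.filter (fun s => G.IsNClique 3 s) with hT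
  have hncard : {s : Finset (ZMod n) | G.IsNClique 3 s}.ncard = T.card := by
    rw [Set.ncard_eq_toFinset_card']
    congr 1
    ext s
    simp [hT]
  set O : Finset (ZMod n × ZMod n × ZMod n) :=
    univ.filter (fun t => G.Adj t.1 t.2.1 ∧ G.Adj t.1 t.2.2 ∧ G.Adj t.2.1 t.2.2) with hO
  -- Step B : O.card = 6 * T.card
  have hB : O.card = 6 * T.card := by
    have hmap : ∀ t ∈ O, ({t.1, t.2.1, t.2.2} : Finset (ZMod n)) ∈ T := by
      rintro ⟨x, y, z⟩ ht
      simp only [hO, mem_filter, mem_univ, true_and] at ht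
      simp only [hT, mem_filter, mem_univ, true_and]
      exact SimpleGraph.is3Clique_triple_iff.mpr ht
    rw [Finset.card_eq_sum_card_fiberwise hmap]
    rw [Finset.sum_const_nat (m := 6) ?_, mul_comm]
    intro s hs
    simp only [hT, mem_filter, mem_univ, true_and] at hs
    obtain ⟨a, b, c, hab, hac, hbc, rfl⟩ := SimpleGraph.is3Clique_iff.mp hs
    have hab' : a ≠ b := hab.ne
    have hac' : a ≠ c := hac.ne
    have hbc' : b ≠ c := hbc.ne
    have hba' : b ≠ a := hab'.symm
    have hca' : c ≠ a := hac'.symm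
    have hcb' : c ≠ b := hbc'.symm
    have hfib : O.filter (fun t => ({t.1, t.2.1, t.2.2} : Finset (ZMod n)) = {a, b, c})
        = {(a,b,c), (a,c,b), (b,a,c), (b,c,a), (c,a,b), (c,b,a)} := by
      ext ⟨x, y, z⟩
      simp only [hO, mem_filter, mem_univ, true_and, mem_insert, mem_singleton,
        Prod.mk.injEq]
      constructor
      · rintro ⟨⟨hxy1, hxz1, hyz1⟩, heq⟩
        have hx : x ∈ ({a, b, c} : Finset (ZMod n)) := by rw [← heq]; simp
        have hy : y ∈ ({a, b, c} : Finset (ZMod n)) := by rw [← heq]; simp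
        have hz : z ∈ ({a, b, c} : Finset (ZMod n)) := by rw [← heq]; simp
        have hxy' : x ≠ y := hxy1.ne
        have hxz' : x ≠ z := hxz1.ne
        have hyz' : y ≠ z := hyz1.ne
        simp only [mem_insert, mem_singleton] at hx hy hz
        rcases hx with rfl | rfl | rfl <;> rcases hy with rfl | rfl | rfl <;>
          rcases hz with rfl | rfl | rfl <;> simp_all
      · have hset : ∀ p q r : ZMod n, ({p, q, r} : Finset (ZMod n)) = {a, b, c} →
          True := fun _ _ _ _ => trivial
        rintro (⟨rfl, rfl, rfl⟩ | ⟨rfl, rfl, rfl⟩ | ⟨rfl, rfl, rfl⟩ |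
          ⟨rfl, rfl, rfl⟩ | ⟨rfl, rfl, rfl⟩ | ⟨rfl, rfl, rfl⟩)
        · exact ⟨⟨hab, hac, hbc⟩, rfl⟩
        · exact ⟨⟨hac, hab, hbc.symm⟩, by ext w; simp; tauto⟩
        · exact ⟨⟨hab.symm, hbc, hac⟩, by ext w; simp; tauto⟩
        · exact ⟨⟨hbc, hab.symm, hac.symm⟩, by ext w; simp; tauto⟩
        · exact ⟨⟨hac.symm, hbc.symm, hab⟩, by ext w; simp; tauto⟩
        · exact ⟨⟨hbc.symm, hac.symm, hab.symm⟩, by ext w; simp; tauto⟩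
    rw [hfib]
    have hsix : ({(a,b,c), (a,c,b), (b,a,c), (b,c,a), (c,a,b), (c,b,a)} :
        Finset (ZMod n × ZMod n × ZMod n)).card = 6 := by
      rw [Finset.card_insert_of_notMem (by
            simp only [mem_insert, mem_singleton, Prod.mk.injEq, not_or]; tauto),
          Finset.card_insert_of_notMem (by
            simp only [mem_insert, mem_singleton, Prod.mk.injEq, not_or]; tauto),
          Finset.card_insert_of_notMem (by
            simp only [mem_insert, mem_singleton, Prod.mk.injEq, not_or]; tauto),
          Finset.card_insert_of_notMem (by
            simp only [mem_insert, mem_singleton, Prod.mk.injEq, not_or]; tauto),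
          Finset.card_insert_of_notMem (by
            simp only [mem_singleton, Prod.mk.injEq]; tauto),
          Finset.card_singleton]
    rw [hsix]
  -- Step C : O.card = n * φ(n) * S₂(n)
  set P : Finset (ZMod n × ZMod n × ZMod n) :=
    univ ×ˢ (univ.filter (fun u : ZMod n => IsUnit u)) ×ˢ
      (univ.filter (fun w : ZMod n => IsUnit w ∧ IsUnit (w - 1))) with hP
  have hPO : P.card = O.card := by
    apply Finset.card_bij (fun t _ => (t.1, t.1 + t.2.1, t.1 + t.2.1 * t.2.2))
    · rintro ⟨a, u, w⟩ ha
      simp only [hP, mem_product, mem_filter, mem_univ, true_and] at ha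
      obtain ⟨hu, hw, hw1⟩ := ha
      simp only [hO, mem_filter, mem_univ, true_and]
      refine ⟨adj_of_isUnit_sub ?_, adj_of_isUnit_sub ?_, adj_of_isUnit_sub ?_⟩
      · have h : a - (a + u) = -u := by ring
        rw [h]; exact hu.neg
      · have h : a - (a + u * w) = -(u * w) := by ring
        rw [h]; exact (hu.mul hw).neg
      · have h : (a + u) - (a + u * w) = -(u * (w - 1)) := by ring
        rw [h]; exact (hu.mul hw1).neg
    · rintro ⟨a, u, w⟩ ha ⟨a', u', w'⟩ ha' h
      simp only [hP, mem_product, mem_filter, mem_univ, true_and] at ha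
      simp only [Prod.mk.injEq] at h
      obtain ⟨h1, h2, h3⟩ := h
      subst h1
      have hu : u = u' := by linear_combination h2
      subst hu
      have huw : u * w = u * w' := by linear_combination h3
      obtain ⟨uu, rfl⟩ := ha.1
      rw [Units.mul_right_inj] at huw
      simp [huw]
    · rintro ⟨a, b, c⟩ hb
      simp only [hO, mem_filter, mem_univ, true_and] at hb
      obtain ⟨hab, hac, hbc⟩ := hb
      have hu : IsUnit (b - a) := by rw [← neg_sub]; exact hab.2.neg
      have hca : IsUnit (c - a) := by rw [← neg_sub]; exact hac.2.neg
      have hcb : IsUnit (c - b) := by rw [← neg_sub]; exact hbc.2.neg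
      obtain ⟨uu, huu⟩ := hu
      refine ⟨(a, b - a, (↑uu⁻¹ : ZMod n) * (c - a)), ?_, ?_⟩
      · simp only [hP, mem_product, mem_filter, mem_univ, true_and]
        refine ⟨⟨uu, huu⟩, (uu⁻¹.isUnit).mul hca, ?_⟩
        have h1 : ((↑uu⁻¹ : ZMod n) * (c - a) - 1) = (↑uu⁻¹ : ZMod n) * (c - b) := by
          have h2 : ((↑uu⁻¹ : ZMod n) * (↑uu : ZMod n)) = 1 := uu.inv_mul
          calc (↑uu⁻¹ : ZMod n) * (c - a) - 1
              = (↑uu⁻¹ : ZMod n) * (c - a) - (↑uu⁻¹ : ZMod n) * (↑uu : ZMod n) := by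
                rw [h2]
            _ = (↑uu⁻¹ : ZMod n) * (c - b) := by rw [huu]; ring
        rw [h1]
        exact (uu⁻¹.isUnit).mul hcb
      · have h2 : a + (b - a) = b := by ring
        have h3 : a + (b - a) * ((↑uu⁻¹ : ZMod n) * (c - a)) = c := by
          rw [← huu, ← mul_assoc, Units.mul_inv, one_mul]
          ring
        simp [Prod.ext_iff, h2, h3]
  have hPcard : P.card = n * Nat.totient n * schemmel 2 n := by
    rw [hP, Finset.card_product, Finset.card_product, Finset.card_univ, ZMod.card,
      card_filter_isUnit n, card_filter_schemmel n hn, mul_assoc]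
  rw [hncard, ← hB, ← hPO, hPcard]
end

section
/- For every integer $n\ge 2$, the clique number of the unitary Cayley graph $G_{\mathbb{Z}/n\mathbb{Z}}$ (the largest $m$ such that $G_{\mathbb{Z}/n\mathbb{Z}}$ contains a clique of order $m$) equals the smallest prime factor of $n$. -/
lemma coprime_of_pos_lt_minFac {k n : ℕ} (hk : 0 < k) (h : k < n.minFac) :
    Nat.Coprime k n := by
  by_contra h1
  have hg2 : 2 ≤ Nat.gcd k n := by
    have h0 : 0 < Nat.gcd k n := Nat.gcd_pos_of_pos_left n hk
    unfold Nat.Coprime at h1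
    omega
  set q := (Nat.gcd k n).minFac with hq
  have hqp : q.Prime := Nat.minFac_prime (by omega)
  have hqk : q ∣ k := (Nat.minFac_dvd _).trans (Nat.gcd_dvd_left k n)
  have hqn : q ∣ n := (Nat.minFac_dvd _).trans (Nat.gcd_dvd_right k n)
  have h1 : n.minFac ≤ q := Nat.minFac_le_of_dvd hqp.two_le hqn
  have h2 : q ≤ k := Nat.le_of_dvd hk hqk
  omega

/-- The clique number of `G_{ℤ/nℤ}` — the largest `m` such that `G_{ℤ/nℤ}`
contains a clique of order `m` — equals the smallest prime factor of `n`. -/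
theorem cliqueNumber_of_unitaryCayley (n : ℕ) (hn : 2 ≤ n) :
    IsGreatest {m : ℕ | ∃ s : Finset (ZMod n), (unitaryCayley n).IsNClique m s}
      (Nat.minFac n) := by
  have hn1 : n ≠ 1 := by omega
  set p := n.minFac with hp
  have hpn : p ∣ n := Nat.minFac_dvd n
  have hpprime : p.Prime := Nat.minFac_prime hn1
  have hp2 : 2 ≤ p := hpprime.two_le
  have hple : p ≤ n := Nat.minFac_le (by omega)
  haveI : NeZero n := ⟨by omega⟩
  constructor
  · refine ⟨(Finset.range p).image (Nat.cast : ℕ → ZMod n), ?_, ?_⟩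
    · intro u hu v hv huv
      simp only [Finset.coe_image, Finset.coe_range, Set.mem_image,
        Set.mem_Iio] at hu hv
      obtain ⟨a, ha, rfl⟩ := hu
      obtain ⟨b, hb, rfl⟩ := hv
      refine ⟨huv, ?_⟩
      have hab : a ≠ b := fun h => huv (by rw [h])
      rcases lt_or_gt_of_ne hab with h | h
      · rw [← neg_sub]
        apply IsUnit.neg
        rw [← Nat.cast_sub h.le, ZMod.isUnit_iff_coprime]
        exact coprime_of_pos_lt_minFac (by omega) (by omega)
      · rw [← Nat.cast_sub h.le, ZMod.isUnit_iff_coprime]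
        exact coprime_of_pos_lt_minFac (by omega) (by omega)
    · rw [Finset.card_image_of_injOn, Finset.card_range]
      intro a ha b hb hab
      simp only [Finset.coe_range, Set.mem_Iio] at ha hb
      have := congrArg ZMod.val hab
      rwa [ZMod.val_natCast, ZMod.val_natCast,
        Nat.mod_eq_of_lt (by omega), Nat.mod_eq_of_lt (by omega)] at this
  · rintro m ⟨s, hclique, hcard⟩
    by_contra hlt
    push_neg at hlt
    haveI : Fact p.Prime := ⟨hpprime⟩
    let f := ZMod.castHom hpn (ZMod p)
    have hcardlt : (Finset.univ : Finset (ZMod p)).card < s.card := by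
      rw [Finset.card_univ, ZMod.card, hcard]; exact hlt
    obtain ⟨u, hu, v, hv, huv, hfuv⟩ :=
      Finset.exists_ne_map_eq_of_card_lt_of_maps_to hcardlt
        (fun a _ => Finset.mem_univ (f a))
    have hadj := hclique hu hv huv
    have hunit : IsUnit (f (u - v)) := hadj.2.map f
    rw [map_sub, hfuv, sub_self] at hunit
    exact not_isUnit_zero hunit
end
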